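/- Let e0, s0, K_M be positive reals and define h⁻(p) = ½(e0+K_M+s0−p) − ½√((e0+K_M+s0−p)² − 4e0(s0−p)) for p in [0, s0]. Then h⁻ is twice differentiable on [0, s0], its second derivative satisfies (h⁻)''(p) = −2e0·K_M/((e0+K_M+s0−p)² − 4e0(s0−p))^{3/2} < 0 for all p in [0, s0], (h⁻)'(p) < 0 on [0, s0], and the maximum of |(h⁻)'(p)| over [0, s0] equals −(h⁻)'(s0) = e0/(K_M + e0). -/

import Mathlib

/-- derivative properties of the physical branch h⁻ of the c-nullcline
in the (p,c) phase plane. -/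
theorem hminus_derivative_properties (e0 s0 KM : ℝ)
    (he0 : 0 < e0) (hs0 : 0 < s0) (hKM : 0 < KM) :
    let hm : ℝ → ℝ := fun p =>
      (e0 + KM + s0 - p) / 2 - Real.sqrt ((e0 + KM + s0 - p) ^ 2 - 4 * e0 * (s0 - p)) / 2
    (∀ p ∈ Set.Icc (0 : ℝ) s0, DifferentiableAt ℝ hm p) ∧
    (∀ p ∈ Set.Icc (0 : ℝ) s0, DifferentiableAt ℝ (deriv hm) p) ∧
    (∀ p ∈ Set.Icc (0 : ℝ) s0,
      deriv (deriv hm) p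
          = -(2 * e0 * KM) / Real.sqrt ((e0 + KM + s0 - p) ^ 2 - 4 * e0 * (s0 - p)) ^ 3 ∧
      deriv (deriv hm) p < 0) ∧
    (∀ p ∈ Set.Icc (0 : ℝ) s0, deriv hm p < 0) ∧
    IsMaxOn (fun p => |deriv hm p|) (Set.Icc (0 : ℝ) s0) s0 ∧
    -(deriv hm s0) = e0 / (KM + e0) := by
  intro hm
  -- the discriminant is always positive
  have hDpos : ∀ p : ℝ, 0 < (e0 + KM + s0 - p) ^ 2 - 4 * e0 * (s0 - p) := by
    intro p
    nlinarith [sq_nonneg (s0 - p + KM - e0), mul_pos he0 hKM]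
  have hspos : ∀ p : ℝ, 0 < Real.sqrt ((e0 + KM + s0 - p) ^ 2 - 4 * e0 * (s0 - p)) :=
    fun p => Real.sqrt_pos.mpr (hDpos p)
  have hsq : ∀ p : ℝ, Real.sqrt ((e0 + KM + s0 - p) ^ 2 - 4 * e0 * (s0 - p)) ^ 2
      = (e0 + KM + s0 - p) ^ 2 - 4 * e0 * (s0 - p) :=
    fun p => Real.sq_sqrt (hDpos p).le
  -- derivative of the discriminant
  have hD' : ∀ p : ℝ, HasDerivAt (fun q : ℝ => (e0 + KM + s0 - q) ^ 2 - 4 * e0 * (s0 - q))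
      (-2 * (e0 + KM + s0 - p) + 4 * e0) p := by
    intro p
    have h1 : HasDerivAt (fun q : ℝ => e0 + KM + s0 - q) (-1) p := by
      simpa using (hasDerivAt_id p).const_sub (e0 + KM + s0)
    have hb : HasDerivAt (fun q : ℝ => s0 - q) (-1) p := by
      simpa using (hasDerivAt_id p).const_sub s0
    have ha := h1.pow 2
    have hc := hb.const_mul (4 * e0)
    refine (ha.sub hc).congr_deriv ?_
    push_cast
    ring
  -- first derivative of hm
  set g : ℝ → ℝ := fun p => -(1:ℝ)/2 + (e0 + KM + s0 - p - 2 * e0) /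
      (2 * Real.sqrt ((e0 + KM + s0 - p) ^ 2 - 4 * e0 * (s0 - p))) with hgdef
  have hmderiv : ∀ p : ℝ, HasDerivAt hm (g p) p := by
    intro p
    have h1 : HasDerivAt (fun q : ℝ => e0 + KM + s0 - q) (-1) p := by
      simpa using (hasDerivAt_id p).const_sub (e0 + KM + s0)
    have hsqrt := (hD' p).sqrt (ne_of_gt (hDpos p))
    have := (h1.div_const 2).sub (hsqrt.div_const 2)
    refine this.congr_deriv ?_
    symm
    have hs := hspos p
    have h2 := hsq p
    rw [hgdef]
    field_simp
    ring
  have hg : deriv hm = g := funext fun p => (hmderiv p).deriv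
  -- second derivative
  set g2 : ℝ → ℝ := fun p => -(2 * e0 * KM) /
      Real.sqrt ((e0 + KM + s0 - p) ^ 2 - 4 * e0 * (s0 - p)) ^ 3 with hg2def
  have hgderiv : ∀ p : ℝ, HasDerivAt g (g2 p) p := by
    intro p
    have h1 : HasDerivAt (fun q : ℝ => e0 + KM + s0 - q - 2 * e0) (-1) p := by
      simpa using ((hasDerivAt_id p).const_sub (e0 + KM + s0)).sub_const (2 * e0)
    have hsqrt := (hD' p).sqrt (ne_of_gt (hDpos p))
    have hden := hsqrt.const_mul 2
    have hne : 2 * Real.sqrt ((e0 + KM + s0 - p) ^ 2 - 4 * e0 * (s0 - p)) ≠ 0 :=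
      mul_ne_zero two_ne_zero (ne_of_gt (hspos p))
    have hquot := h1.div hden hne
    have := (hasDerivAt_const p (-(1:ℝ)/2)).add hquot
    refine this.congr_deriv ?_
    symm
    have hs := hspos p
    have h2 := hsq p
    set s := Real.sqrt ((e0 + KM + s0 - p) ^ 2 - 4 * e0 * (s0 - p)) with hsdef
    rw [hg2def]
    beta_reduce
    rw [← hsdef]
    field_simp
    linear_combination 2 * h2
  have hgg : deriv (deriv hm) = g2 := by
    rw [hg]; exact funext fun p => (hgderiv p).deriv
  -- g is negative everywhere
  have hgneg : ∀ p : ℝ, g p < 0 := by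
    intro p
    have hs := hspos p
    have h2 := hsq p
    set s := Real.sqrt ((e0 + KM + s0 - p) ^ 2 - 4 * e0 * (s0 - p)) with hsdef
    have hN : e0 + KM + s0 - p - 2 * e0 < s := by
      nlinarith [mul_pos he0 hKM]
    have hlt : (e0 + KM + s0 - p - 2 * e0) / (2 * s) < 1 / 2 := by
      rw [div_lt_iff₀ (by linarith)]
      linarith
    rw [hgdef]
    simp only
    linarith
  -- g2 is negative everywhere
  have hg2neg : ∀ p : ℝ, g2 p < 0 := by
    intro p
    have hs := hspos p
    rw [hg2def]
    simp only
    apply div_neg_of_neg_of_pos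
    · nlinarith [mul_pos he0 hKM]
    · positivity
  -- g is strictly antitone
  have hanti : StrictAnti g := by
    apply strictAnti_of_deriv_neg
    intro x
    rw [(hgderiv x).deriv]
    exact hg2neg x
  refine ⟨fun p _ => (hmderiv p).differentiableAt, ?_, ?_, ?_, ?_, ?_⟩
  · intro p _
    rw [hg]
    exact (hgderiv p).differentiableAt
  · intro p _
    rw [hgg]
    exact ⟨rfl, hg2neg p⟩
  · intro p _
    rw [hg]
    exact hgneg p
  · intro p hp
    simp only [Set.mem_setOf_eq, hg]
    rw [abs_of_neg (hgneg p), abs_of_neg (hgneg s0)]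
    have := hanti.antitone hp.2
    linarith
  · rw [hg, hgdef]
    simp only
    have h1 : (e0 + KM + s0 - s0) ^ 2 - 4 * e0 * (s0 - s0) = (e0 + KM) ^ 2 := by ring
    rw [h1, Real.sqrt_sq (by positivity)]
    field_simp
    ring
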